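/- arXiv:1805.01691 — 3 statements merged into one kernel-verified Lean document; each statement's English description precedes it below -/
import Mathlib

section
/- Let λ, μ > 0 and T > 0. There exists a constant c > 0 depending only on λ, μ and T such that for every positive integer n, Σ_{i=0}^{n-1} Σ_{j=0}^{n-1} Σ_{k=0}^{n-1} ∫∫ |u_i(x,z) u_j(x,z) u_k(x,z)| dν_n(x,z) ≤ c n. -/
open MeasureTheory

/-- The trapeze `C_t = {(x,z) : 0 ≤ x ≤ t, z ≥ t - x}` (inside `[0,∞)²`). -/
def Ctrap (t : ℝ) : Set (ℝ × ℝ) := {p | 0 ≤ p.1 ∧ p.1 ≤ t ∧ t - p.1 ≤ p.2}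

/-- Indicator of `C_t`. -/
noncomputable def indC (t : ℝ) (p : ℝ × ℝ) : ℝ :=
  Set.indicator (Ctrap t) (fun _ => (1 : ℝ)) p

/-- `u_i(x,z) = (1/√T)(1_{C_{(i+1)T/n}} - 1_{C_{iT/n}} + μ ∫_{iT/n}^{(i+1)T/n} 1_{C_u} du)(x,z)`. -/
noncomputable def uSharp (T μ : ℝ) (n i : ℕ) (p : ℝ × ℝ) : ℝ :=
  (1 / Real.sqrt T) *
    (indC (((i : ℝ) + 1) * T / n) p - indC ((i : ℝ) * T / n) p +
      μ * ∫ u in ((i : ℝ) * T / n)..(((i : ℝ) + 1) * T / n), indC u p)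

/-! ### Auxiliary lemmas -/

/-- `indC · p` is the indicator of an interval `Icc c d` (possibly empty). -/
lemma indC_eq_interval (p : ℝ × ℝ) :
    ∃ c d : ℝ, ∀ t, indC t p = Set.indicator (Set.Icc c d) (fun _ => (1:ℝ)) t := by
  by_cases hx : 0 ≤ p.1
  · refine ⟨p.1, p.1 + p.2, fun t => ?_⟩
    unfold indC Ctrap
    by_cases h : p.1 ≤ t ∧ t ≤ p.1 + p.2
    · rw [Set.indicator_of_mem, Set.indicator_of_mem]
      · exact Set.mem_Icc.mpr h
      · exact ⟨hx, h.1, by linarith [h.2]⟩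
    · rw [Set.indicator_of_notMem, Set.indicator_of_notMem]
      · exact fun hc => h (Set.mem_Icc.mp hc)
      · intro hc
        obtain ⟨_, h1, h2⟩ := hc
        exact h ⟨h1, by linarith⟩
  · refine ⟨1, 0, fun t => ?_⟩
    rw [show indC t p = 0 from Set.indicator_of_notMem (fun hc => hx hc.1) _,
        Set.indicator_of_notMem]
    intro hc
    rw [Set.mem_Icc] at hc
    linarith [hc.1, hc.2]

lemma indC_mem_prod_measurable :
    Measurable (fun q : (ℝ × ℝ) × ℝ => indC q.2 q.1) := by
  have hS : MeasurableSet {q : (ℝ × ℝ) × ℝ | 0 ≤ q.1.1 ∧ q.1.1 ≤ q.2 ∧ q.2 - q.1.1 ≤ q.1.2} := by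
    apply MeasurableSet.inter
    · exact measurableSet_le measurable_const (measurable_fst.fst)
    apply MeasurableSet.inter
    · exact measurableSet_le (measurable_fst.fst) measurable_snd
    · exact measurableSet_le (measurable_snd.sub measurable_fst.fst) measurable_fst.snd
  have : (fun q : (ℝ × ℝ) × ℝ => indC q.2 q.1)
      = Set.indicator {q : (ℝ × ℝ) × ℝ | 0 ≤ q.1.1 ∧ q.1.1 ≤ q.2 ∧ q.2 - q.1.1 ≤ q.1.2}
          (fun _ => (1:ℝ)) := by
    funext q
    simp only [indC, Ctrap, Set.indicator]
    by_cases h : 0 ≤ q.1.1 ∧ q.1.1 ≤ q.2 ∧ q.2 - q.1.1 ≤ q.1.2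
    · exact (if_pos h).trans (if_pos h).symm
    · exact (if_neg h).trans (if_neg h).symm
  rw [this]
  exact (measurable_const.indicator hS)

lemma indC_measurable (t : ℝ) : Measurable (indC t) := by
  exact measurable_const.indicator (by
    apply MeasurableSet.inter
    · exact measurableSet_le measurable_const measurable_fst
    apply MeasurableSet.inter
    · exact measurableSet_le measurable_fst measurable_const
    · exact measurableSet_le (measurable_const.sub measurable_fst) measurable_snd)

lemma indC_nonneg (t : ℝ) (p : ℝ × ℝ) : 0 ≤ indC t p :=
  Set.indicator_nonneg (fun _ _ => zero_le_one) p

lemma indC_le_one (t : ℝ) (p : ℝ × ℝ) : indC t p ≤ 1 := by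
  classical
  rw [indC, Set.indicator_apply]
  split <;> norm_num

lemma sum_if_le_one {P : ℕ → Prop} [DecidablePred P]
    (h : ∀ i j, P i → P j → i = j) (n : ℕ) :
    ∑ i ∈ Finset.range n, (if P i then (1:ℝ) else 0) ≤ 1 := by
  rw [Finset.sum_boole]
  have : (Finset.filter (fun x => P x) (Finset.range n)).card ≤ 1 :=
    Finset.card_le_one.mpr (fun a ha b hb =>
      h a b (Finset.mem_filter.mp ha).2 (Finset.mem_filter.mp hb).2)
  exact_mod_cast this

/-- Bounded variation of the indicator of an interval along a monotone sequence. -/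
lemma var_le_two (a : ℕ → ℝ) (ha : Monotone a) (c d : ℝ) (n : ℕ) :
    ∑ i ∈ Finset.range n,
      |Set.indicator (Set.Icc c d) (fun _ => (1:ℝ)) (a (i+1))
        - Set.indicator (Set.Icc c d) (fun _ => (1:ℝ)) (a i)| ≤ 2 := by
  classical
  have key : ∀ i, |Set.indicator (Set.Icc c d) (fun _ => (1:ℝ)) (a (i+1))
        - Set.indicator (Set.Icc c d) (fun _ => (1:ℝ)) (a i)|
      ≤ (if a i < c ∧ c ≤ a (i+1) then (1:ℝ) else 0)
        + (if a i ≤ d ∧ d < a (i+1) then (1:ℝ) else 0) := by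
    intro i
    have hm : a i ≤ a (i+1) := ha (Nat.le_succ i)
    by_cases h1 : a (i+1) ∈ Set.Icc c d <;> by_cases h2 : a i ∈ Set.Icc c d
    · rw [Set.indicator_of_mem h1, Set.indicator_of_mem h2]
      simp only [sub_self, abs_zero]
      split_ifs <;> norm_num
    · rw [Set.indicator_of_mem h1, Set.indicator_of_notMem h2]
      rw [Set.mem_Icc] at h1
      rw [Set.mem_Icc, not_and_or, not_le, not_le] at h2
      have hc1 : a i < c := by
        rcases h2 with h | h
        · exact h
        · linarith [h1.2]
      rw [if_pos ⟨hc1, h1.1⟩]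
      split_ifs <;> norm_num
    · rw [Set.indicator_of_notMem h1, Set.indicator_of_mem h2]
      rw [Set.mem_Icc] at h2
      rw [Set.mem_Icc, not_and_or, not_le, not_le] at h1
      have hd1 : d < a (i+1) := by
        rcases h1 with h | h
        · linarith [h2.1]
        · exact h
      have h3 : (if a i ≤ d ∧ d < a (i+1) then (1:ℝ) else 0) = 1 := if_pos ⟨h2.2, hd1⟩
      rw [h3]
      split_ifs <;> norm_num
    · rw [Set.indicator_of_notMem h1, Set.indicator_of_notMem h2]
      simp only [sub_self, abs_zero]
      split_ifs <;> norm_num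
  calc ∑ i ∈ Finset.range n, |Set.indicator (Set.Icc c d) (fun _ => (1:ℝ)) (a (i+1))
        - Set.indicator (Set.Icc c d) (fun _ => (1:ℝ)) (a i)|
      ≤ ∑ i ∈ Finset.range n, ((if a i < c ∧ c ≤ a (i+1) then (1:ℝ) else 0)
        + (if a i ≤ d ∧ d < a (i+1) then (1:ℝ) else 0)) :=
        Finset.sum_le_sum (fun i _ => key i)
    _ = (∑ i ∈ Finset.range n, if a i < c ∧ c ≤ a (i+1) then (1:ℝ) else 0)
        + ∑ i ∈ Finset.range n, if a i ≤ d ∧ d < a (i+1) then (1:ℝ) else 0 :=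
        Finset.sum_add_distrib
    _ ≤ 1 + 1 := by
        gcongr
        · apply sum_if_le_one
          intro i j hi hj
          by_contra hne
          rcases Nat.lt_or_ge i j with hij | hij
          · exact absurd (lt_of_le_of_lt (le_trans hi.2 (ha hij)) hj.1) (lt_irrefl c)
          · have hij' : j < i := by omega
            exact absurd (lt_of_le_of_lt (le_trans hj.2 (ha hij')) hi.1) (lt_irrefl c)
        · apply sum_if_le_one
          intro i j hi hj
          by_contra hne
          rcases Nat.lt_or_ge i j with hij | hij
          · exact absurd (lt_of_lt_of_le hi.2 (le_trans (ha hij) hj.1)) (lt_irrefl d)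
          · have hij' : j < i := by omega
            exact absurd (lt_of_lt_of_le hj.2 (le_trans (ha hij') hi.1)) (lt_irrefl d)
    _ = 2 := by norm_num

/-- Key pointwise bound: `Σ_i |u_i(p)| ≤ (2 + μT)/√T`. -/
lemma sum_abs_uSharp_le (mu T : ℝ) (hmu : 0 < mu) (hT : 0 < T) {n : ℕ} (hn : 0 < n)
    (p : ℝ × ℝ) :
    ∑ i ∈ Finset.range n, |uSharp T mu n i p| ≤ (2 + mu * T) / Real.sqrt T := by
  obtain ⟨c, d, hcd⟩ := indC_eq_interval p
  have hnR : (0:ℝ) < n := by exact_mod_cast hn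
  set a : ℕ → ℝ := fun i => (i : ℝ) * T / n with ha_def
  have hsT : 0 < Real.sqrt T := Real.sqrt_pos.mpr hT
  have hamono : Monotone a := by
    intro i j hij
    have h1 : (i:ℝ) ≤ (j:ℝ) := by exact_mod_cast hij
    simp only [ha_def]
    gcongr
  have hcast : ∀ i : ℕ, ((i : ℝ) + 1) * T / n = a (i + 1) := by
    intro i; simp only [ha_def]; push_cast; ring
  have hfun : (fun u => indC u p) = Set.indicator (Set.Icc c d) (fun _ => (1:ℝ)) :=
    funext hcd
  have hint : ∀ i : ℕ, IntervalIntegrable (fun u => indC u p) volume (a i) (a (i+1)) := by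
    intro i
    rw [hfun]
    constructor <;>
      exact ((integrableOn_const_iff).mpr (Or.inr measure_Ioc_lt_top)).indicator measurableSet_Icc
  have hC_nonneg : ∀ i : ℕ, 0 ≤ ∫ u in (a i)..(a (i+1)), indC u p := by
    intro i
    apply intervalIntegral.integral_nonneg (hamono (Nat.le_succ i))
    exact fun u _ => indC_nonneg u p
  have hstep : ∀ i : ℕ,
      |uSharp T mu n i p| ≤ (1 / Real.sqrt T) *
        (|indC (a (i+1)) p - indC (a i) p| + mu * ∫ u in (a i)..(a (i+1)), indC u p) := by
    intro i
    have : uSharp T mu n i p = (1 / Real.sqrt T) *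
        (indC (a (i+1)) p - indC (a i) p + mu * ∫ u in (a i)..(a (i+1)), indC u p) := by
      rw [uSharp, hcast i]
    rw [this, abs_mul, abs_of_nonneg (by positivity : (0:ℝ) ≤ 1 / Real.sqrt T)]
    gcongr
    calc |indC (a (i+1)) p - indC (a i) p + mu * ∫ u in (a i)..(a (i+1)), indC u p|
        ≤ |indC (a (i+1)) p - indC (a i) p| + |mu * ∫ u in (a i)..(a (i+1)), indC u p| :=
          abs_add_le _ _
      _ = |indC (a (i+1)) p - indC (a i) p| + mu * ∫ u in (a i)..(a (i+1)), indC u p := by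
          rw [abs_of_nonneg (mul_nonneg hmu.le (hC_nonneg i))]
  calc ∑ i ∈ Finset.range n, |uSharp T mu n i p|
      ≤ ∑ i ∈ Finset.range n, (1 / Real.sqrt T) *
        (|indC (a (i+1)) p - indC (a i) p| + mu * ∫ u in (a i)..(a (i+1)), indC u p) :=
        Finset.sum_le_sum fun i _ => hstep i
    _ = (1 / Real.sqrt T) *
        ((∑ i ∈ Finset.range n, |indC (a (i+1)) p - indC (a i) p|)
          + mu * ∑ i ∈ Finset.range n, ∫ u in (a i)..(a (i+1)), indC u p) := by
        rw [← Finset.mul_sum, Finset.sum_add_distrib, Finset.mul_sum]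
    _ ≤ (1 / Real.sqrt T) * (2 + mu * T) := by
        have hvar : ∑ i ∈ Finset.range n, |indC (a (i+1)) p - indC (a i) p| ≤ 2 := by
          have := var_le_two a hamono c d n
          simpa only [← hcd] using this
        have htel : ∑ i ∈ Finset.range n, ∫ u in (a i)..(a (i+1)), indC u p
            = ∫ u in (a 0)..(a n), indC u p :=
          intervalIntegral.sum_integral_adjacent_intervals fun k _ => hint k
        have hbound : ∫ u in (a 0)..(a n), indC u p ≤ T := by
          have h1 : ‖∫ u in (a 0)..(a n), indC u p‖ ≤ 1 * |a n - a 0| := by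
            apply intervalIntegral.norm_integral_le_of_norm_le_const
            intro u _
            rw [Real.norm_eq_abs, abs_of_nonneg (indC_nonneg u p)]
            exact indC_le_one u p
          have ha0 : a 0 = 0 := by simp [ha_def]
          have han : a n = T := by
            simp only [ha_def]
            field_simp
          calc ∫ u in (a 0)..(a n), indC u p
              ≤ |∫ u in (a 0)..(a n), indC u p| := le_abs_self _
            _ ≤ 1 * |a n - a 0| := h1
            _ = T := by rw [ha0, han, one_mul, sub_zero, abs_of_nonneg hT.le]
        apply mul_le_mul_of_nonneg_left _ (by positivity : (0:ℝ) ≤ 1 / Real.sqrt T)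
        apply add_le_add hvar
        rw [htel]
        exact mul_le_mul_of_nonneg_left hbound hmu.le
    _ = (2 + mu * T) / Real.sqrt T := by ring

/-- `u_i` vanishes where `x > T`. -/
lemma uSharp_eq_zero (T mu : ℝ) (hT : 0 < T) {n i : ℕ} (hn : 0 < n) (hi : i < n)
    {p : ℝ × ℝ} (hp : T < p.1) : uSharp T mu n i p = 0 := by
  have hnR : (0:ℝ) < n := by exact_mod_cast hn
  have hi1 : ((i:ℝ) + 1) ≤ (n:ℝ) := by exact_mod_cast hi
  have hub : ((i:ℝ) + 1) * T / n ≤ T := by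
    rw [div_le_iff₀ hnR]
    calc ((i:ℝ) + 1) * T ≤ (n:ℝ) * T := by gcongr
      _ = T * n := by ring
  have hlb : (i:ℝ) * T / n ≤ ((i:ℝ) + 1) * T / n := by gcongr; linarith
  have h0 : ∀ t, t ≤ T → indC t p = 0 := by
    intro t ht
    apply Set.indicator_of_notMem
    intro hc
    exact absurd (le_trans hc.2.1 ht) (not_le.mpr hp)
  have hInt : (∫ u in ((i:ℝ) * T / n)..(((i:ℝ) + 1) * T / n), indC u p) = 0 := by
    rw [intervalIntegral.integral_congr (g := fun _ => (0:ℝ)) ?_, intervalIntegral.integral_zero]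
    intro u hu
    rw [Set.uIcc_of_le hlb, Set.mem_Icc] at hu
    exact h0 u (le_trans hu.2 hub)
  rw [uSharp, hInt, h0 _ hub, h0 _ (le_trans hlb hub)]
  ring

lemma uSharp_measurable (T mu : ℝ) (hT : 0 < T) (n i : ℕ) :
    Measurable (uSharp T mu n i) := by
  have hAB : (i:ℝ) * T / n ≤ ((i:ℝ) + 1) * T / n := by
    rcases Nat.eq_zero_or_pos n with h | h
    · simp [h]
    · have hnR : (0:ℝ) < n := by exact_mod_cast h
      gcongr
      linarith
  have hIntMeas : Measurable (fun p : ℝ × ℝ =>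
      ∫ u in ((i:ℝ) * T / n)..(((i:ℝ) + 1) * T / n), indC u p) := by
    have heq : (fun p : ℝ × ℝ =>
        ∫ u in ((i:ℝ) * T / n)..(((i:ℝ) + 1) * T / n), indC u p)
        = fun p : ℝ × ℝ =>
          ∫ u, (fun q : (ℝ × ℝ) × ℝ => indC q.2 q.1) (p, u)
            ∂(volume.restrict (Set.Ioc ((i:ℝ) * T / n) (((i:ℝ) + 1) * T / n))) := by
      funext p
      rw [intervalIntegral.integral_of_le hAB]
    rw [heq]
    exact (indC_mem_prod_measurable.stronglyMeasurable.integral_prod_right').measurable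
  unfold uSharp
  exact measurable_const.mul
    (((indC_measurable _).sub (indC_measurable _)).add (hIntMeas.const_mul mu))

/-- The integrand of the third moment. -/
noncomputable def Fm (lam mu T : ℝ) (n i j k : ℕ) (p : ℝ × ℝ) : ℝ :=
  |uSharp T mu n i p * uSharp T mu n j p * uSharp T mu n k p|
    * (lam * n * mu * Real.exp (-mu * p.2))

lemma Fm_nonneg (lam mu T : ℝ) (hlam : 0 < lam) (hmu : 0 < mu) (n i j k : ℕ) (p : ℝ × ℝ) :
    0 ≤ Fm lam mu T n i j k p := by
  apply mul_nonneg (abs_nonneg _)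
  positivity

lemma Fm_measurable (lam mu T : ℝ) (hT : 0 < T) (n i j k : ℕ) :
    Measurable (Fm lam mu T n i j k) := by
  apply Measurable.mul
  · exact (((uSharp_measurable T mu hT n i).mul (uSharp_measurable T mu hT n j)).mul
      (uSharp_measurable T mu hT n k)).abs
  · exact measurable_const.mul ((measurable_snd.const_mul (-mu)).exp)

/-- Sum identity. -/
lemma sum_Fm (lam mu T : ℝ) (n : ℕ) (p : ℝ × ℝ) :
    ∑ i ∈ Finset.range n, ∑ j ∈ Finset.range n, ∑ k ∈ Finset.range n, Fm lam mu T n i j k p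
      = (∑ i ∈ Finset.range n, |uSharp T mu n i p|)^3
          * (lam * n * mu * Real.exp (-mu * p.2)) := by
  have habs : ∀ i j k : ℕ,
      |uSharp T mu n i p * uSharp T mu n j p * uSharp T mu n k p|
        * (lam * n * mu * Real.exp (-mu * p.2))
      = |uSharp T mu n i p| * (|uSharp T mu n j p| * (|uSharp T mu n k p|
          * (lam * n * mu * Real.exp (-mu * p.2)))) := by
    intro i j k
    rw [abs_mul, abs_mul]
    ring
  unfold Fm
  simp only [habs, ← Finset.mul_sum, ← Finset.sum_mul]
  ring

/-- Third-moment bound: `Σ_{i,j,k} ∫∫ |u_i u_j u_k| dν_n ≤ c n`, where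
`dν_n(x,z) = λn dx ⊗ μ e^{-μz} dz` on `[0,∞)²`. -/
theorem stmt11 (lam mu T : ℝ) (hlam : 0 < lam) (hmu : 0 < mu) (hT : 0 < T) :
    ∃ c > 0, ∀ n : ℕ, 0 < n →
      ∑ i ∈ Finset.range n, ∑ j ∈ Finset.range n, ∑ k ∈ Finset.range n,
        (∫ x in Set.Ici (0:ℝ), ∫ z in Set.Ici (0:ℝ),
          |uSharp T mu n i (x, z) * uSharp T mu n j (x, z) * uSharp T mu n k (x, z)|
            * (lam * n * mu * Real.exp (-mu * z)))
      ≤ c * n := by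
  have hsT : 0 < Real.sqrt T := Real.sqrt_pos.mpr hT
  set K : ℝ := (2 + mu * T) / Real.sqrt T with hKdef
  have hK0 : 0 < K := by
    apply div_pos _ hsT
    nlinarith
  have hexpint : IntegrableOn (fun z => Real.exp (-mu * z)) (Set.Ici (0:ℝ)) volume :=
    (integrableOn_Ici_iff_integrableOn_Ioi).mpr (exp_neg_integrableOn_Ioi 0 hmu)
  set Cz : ℝ := ∫ z in Set.Ici (0:ℝ), Real.exp (-mu * z) with hCzdef
  have hCz0 : 0 ≤ Cz := by
    rw [hCzdef]
    apply integral_nonneg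
    exact fun z => (Real.exp_pos _).le
  refine ⟨K^3 * lam * mu * Cz * T + 1, by positivity, ?_⟩
  intro n hn
  have hnR : (0:ℝ) < n := by exact_mod_cast hn
  have hsum : ∀ p : ℝ × ℝ, ∑ i ∈ Finset.range n, |uSharp T mu n i p| ≤ K :=
    fun p => sum_abs_uSharp_le mu T hmu hT hn p
  have hone : ∀ i ∈ Finset.range n, ∀ p : ℝ × ℝ, |uSharp T mu n i p| ≤ K := fun i hi p =>
    le_trans (Finset.single_le_sum (f := fun j => |uSharp T mu n j p|)
      (fun j _ => abs_nonneg _) hi) (hsum p)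
  -- bound on |u_i u_j u_k|
  have htriple : ∀ i ∈ Finset.range n, ∀ j ∈ Finset.range n, ∀ k ∈ Finset.range n,
      ∀ p : ℝ × ℝ, Fm lam mu T n i j k p ≤ K^3 * (lam * n * mu * Real.exp (-mu * p.2)) := by
    intro i hi j hj k hk p
    unfold Fm
    apply mul_le_mul_of_nonneg_right _ (by positivity)
    rw [abs_mul, abs_mul, show K^3 = K * K * K from by ring]
    apply mul_le_mul _ (hone k hk p) (abs_nonneg _) (by positivity)
    exact mul_le_mul (hone i hi p) (hone j hj p) (abs_nonneg _) hK0.le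
  -- integrable bound function in z
  have hgint : IntegrableOn (fun z => K^3 * (lam * n * mu * Real.exp (-mu * z)))
      (Set.Ici (0:ℝ)) volume := by
    have heq : (fun z => K^3 * (lam * n * mu * Real.exp (-mu * z)))
        = fun z => (K^3 * (lam * n * mu)) * Real.exp (-mu * z) := by
      funext z; ring
    rw [heq]
    exact hexpint.const_mul _
  have hfuneq : (fun z => K^3 * (lam * n * mu * Real.exp (-mu * z)))
      = fun z => (K^3 * (lam * (n:ℝ) * mu)) * Real.exp (-mu * z) := by
    funext z; ring
  -- inner integrability in z for each x
  have hFint : ∀ i ∈ Finset.range n, ∀ j ∈ Finset.range n, ∀ k ∈ Finset.range n, ∀ x : ℝ,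
      IntegrableOn (fun z => Fm lam mu T n i j k (x, z)) (Set.Ici (0:ℝ)) volume := by
    intro i hi j hj k hk x
    apply Integrable.mono' hgint
    · exact ((Fm_measurable lam mu T hT n i j k).comp
        measurable_prodMk_left).aestronglyMeasurable
    · apply ae_of_all
      intro z
      rw [Real.norm_eq_abs, abs_of_nonneg (Fm_nonneg lam mu T hlam hmu n i j k _)]
      exact htriple i hi j hj k hk (x, z)
  -- definition of G
  set G : ℕ → ℕ → ℕ → ℝ → ℝ :=
    fun i j k x => ∫ z in Set.Ici (0:ℝ), Fm lam mu T n i j k (x, z) with hGdef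
  have hGnonneg : ∀ i j k x, 0 ≤ G i j k x := by
    intro i j k x
    apply integral_nonneg
    exact fun z => Fm_nonneg lam mu T hlam hmu n i j k _
  -- vanishing for x > T
  have hFzero : ∀ i ∈ Finset.range n, ∀ j ∈ Finset.range n, ∀ k ∈ Finset.range n,
      ∀ x z : ℝ, T < x → Fm lam mu T n i j k (x, z) = 0 := by
    intro i hi j hj k hk x z hx
    unfold Fm
    rw [uSharp_eq_zero T mu hT hn (Finset.mem_range.mp hi) hx]
    simp
  -- G bound by an indicator
  set M : ℝ := K^3 * (lam * n * mu) * Cz with hMdef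
  have hM0 : 0 ≤ M := by positivity
  have hGle : ∀ i ∈ Finset.range n, ∀ j ∈ Finset.range n, ∀ k ∈ Finset.range n,
      ∀ x : ℝ, G i j k x ≤ Set.indicator (Set.Icc 0 T) (fun _ => M) x := by
    intro i hi j hj k hk x
    by_cases hx : x ≤ T
    · by_cases hx0 : 0 ≤ x
      · rw [Set.indicator_of_mem (Set.mem_Icc.mpr ⟨hx0, hx⟩)]
        have hle : G i j k x
            ≤ ∫ z in Set.Ici (0:ℝ), K^3 * (lam * n * mu * Real.exp (-mu * z)) := by
          apply integral_mono_of_nonneg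
            (ae_of_all _ fun z => Fm_nonneg lam mu T hlam hmu n i j k _) hgint
          exact ae_of_all _ fun z => htriple i hi j hj k hk (x, z)
        have heqM : (∫ z in Set.Ici (0:ℝ), K^3 * (lam * n * mu * Real.exp (-mu * z))) = M := by
          rw [hMdef, hCzdef, hfuneq, integral_const_mul]
        exact hle.trans (le_of_eq heqM)
      · -- x < 0 : still fine, use the same integral bound but indicator is 0; show G = bound anyway
        rw [Set.indicator_of_notMem (by simp [Set.mem_Icc]; intro h; exact absurd h hx0)]
        have : ∀ z : ℝ, Fm lam mu T n i j k (x, z) = 0 := by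
          intro z
          unfold Fm
          have hu0 : uSharp T mu n i (x, z) = 0 := by
            have hind : ∀ t, indC t (x, z) = 0 := fun t =>
              Set.indicator_of_notMem (fun hc => hx0 hc.1) _
            rw [uSharp, hind, hind]
            rw [intervalIntegral.integral_congr (g := fun _ => (0:ℝ))
              (fun u _ => hind u), intervalIntegral.integral_zero]
            ring
          rw [hu0]
          simp
        have hGx : G i j k x = ∫ z in Set.Ici (0:ℝ), Fm lam mu T n i j k (x, z) := rfl
        rw [hGx]
        simp only [this]
        rw [integral_zero]
    · rw [Set.indicator_of_notMem (by simp [Set.mem_Icc]; intro _; linarith)]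
      have : ∀ z : ℝ, Fm lam mu T n i j k (x, z) = 0 :=
        fun z => hFzero i hi j hj k hk x z (not_le.mp hx)
      have hGx : G i j k x = ∫ z in Set.Ici (0:ℝ), Fm lam mu T n i j k (x, z) := rfl
      rw [hGx]
      simp only [this]
      rw [integral_zero]
  -- G is integrable on Ici 0
  have hindint : IntegrableOn (Set.indicator (Set.Icc (0:ℝ) T) (fun _ => M))
      (Set.Ici (0:ℝ)) volume := by
    rw [IntegrableOn, integrable_indicator_iff measurableSet_Icc]
    apply (integrableOn_const_iff).mpr
    right
    calc (volume.restrict (Set.Ici (0:ℝ))) (Set.Icc 0 T)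
        ≤ volume (Set.Icc 0 T) := Measure.restrict_apply_le _ _
      _ < ⊤ := measure_Icc_lt_top
  have hGint : ∀ i ∈ Finset.range n, ∀ j ∈ Finset.range n, ∀ k ∈ Finset.range n,
      IntegrableOn (G i j k) (Set.Ici (0:ℝ)) volume := by
    intro i hi j hj k hk
    have hmG : StronglyMeasurable fun x : ℝ =>
        ∫ z, Fm lam mu T n i j k (x, z) ∂(volume.restrict (Set.Ici (0:ℝ))) :=
      StronglyMeasurable.integral_prod_right'
        (Fm_measurable lam mu T hT n i j k).stronglyMeasurable
    apply Integrable.mono' hindint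
    · exact hmG.aestronglyMeasurable
    · apply ae_of_all
      intro x
      rw [Real.norm_eq_abs, abs_of_nonneg (hGnonneg i j k x)]
      exact hGle i hi j hj k hk x
  -- Step 1: swap sums and the x-integral
  have hswap1 :
      ∑ i ∈ Finset.range n, ∑ j ∈ Finset.range n, ∑ k ∈ Finset.range n,
        (∫ x in Set.Ici (0:ℝ), G i j k x)
      = ∫ x in Set.Ici (0:ℝ),
          ∑ i ∈ Finset.range n, ∑ j ∈ Finset.range n, ∑ k ∈ Finset.range n, G i j k x := by
    calc ∑ i ∈ Finset.range n, ∑ j ∈ Finset.range n, ∑ k ∈ Finset.range n,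
          (∫ x in Set.Ici (0:ℝ), G i j k x)
        = ∑ i ∈ Finset.range n, ∑ j ∈ Finset.range n,
            (∫ x in Set.Ici (0:ℝ), ∑ k ∈ Finset.range n, G i j k x) := by
          apply Finset.sum_congr rfl
          intro i hi
          apply Finset.sum_congr rfl
          intro j hj
          exact (integral_finset_sum _ fun k hk => hGint i hi j hj k hk).symm
      _ = ∑ i ∈ Finset.range n,
            (∫ x in Set.Ici (0:ℝ), ∑ j ∈ Finset.range n, ∑ k ∈ Finset.range n, G i j k x) := by
          apply Finset.sum_congr rfl
          intro i hi
          exact (integral_finset_sum _ fun j hj =>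
            integrable_finset_sum _ fun k hk => hGint i hi j hj k hk).symm
      _ = ∫ x in Set.Ici (0:ℝ),
            ∑ i ∈ Finset.range n, ∑ j ∈ Finset.range n, ∑ k ∈ Finset.range n, G i j k x :=
          (integral_finset_sum _ fun i hi => integrable_finset_sum _ fun j hj =>
            integrable_finset_sum _ fun k hk => hGint i hi j hj k hk).symm
  -- Step 2: swap sums and the z-integral (pointwise in x)
  have hswap2 : ∀ x : ℝ,
      ∑ i ∈ Finset.range n, ∑ j ∈ Finset.range n, ∑ k ∈ Finset.range n, G i j k x
      = ∫ z in Set.Ici (0:ℝ),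
          ∑ i ∈ Finset.range n, ∑ j ∈ Finset.range n, ∑ k ∈ Finset.range n,
            Fm lam mu T n i j k (x, z) := by
    intro x
    calc ∑ i ∈ Finset.range n, ∑ j ∈ Finset.range n, ∑ k ∈ Finset.range n, G i j k x
        = ∑ i ∈ Finset.range n, ∑ j ∈ Finset.range n,
            (∫ z in Set.Ici (0:ℝ), ∑ k ∈ Finset.range n, Fm lam mu T n i j k (x, z)) := by
          apply Finset.sum_congr rfl
          intro i hi
          apply Finset.sum_congr rfl
          intro j hj
          exact (integral_finset_sum _ fun k hk => hFint i hi j hj k hk x).symm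
      _ = ∑ i ∈ Finset.range n,
            (∫ z in Set.Ici (0:ℝ), ∑ j ∈ Finset.range n, ∑ k ∈ Finset.range n,
              Fm lam mu T n i j k (x, z)) := by
          apply Finset.sum_congr rfl
          intro i hi
          exact (integral_finset_sum _ fun j hj =>
            integrable_finset_sum _ fun k hk => hFint i hi j hj k hk x).symm
      _ = ∫ z in Set.Ici (0:ℝ),
            ∑ i ∈ Finset.range n, ∑ j ∈ Finset.range n, ∑ k ∈ Finset.range n,
              Fm lam mu T n i j k (x, z) :=
          (integral_finset_sum _ fun i hi => integrable_finset_sum _ fun j hj =>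
            integrable_finset_sum _ fun k hk => hFint i hi j hj k hk x).symm
  -- the LHS of the goal is the triple sum of integrals of G
  have hLHS :
      ∑ i ∈ Finset.range n, ∑ j ∈ Finset.range n, ∑ k ∈ Finset.range n,
        (∫ x in Set.Ici (0:ℝ), ∫ z in Set.Ici (0:ℝ),
          |uSharp T mu n i (x, z) * uSharp T mu n j (x, z) * uSharp T mu n k (x, z)|
            * (lam * n * mu * Real.exp (-mu * z)))
      = ∑ i ∈ Finset.range n, ∑ j ∈ Finset.range n, ∑ k ∈ Finset.range n,
        (∫ x in Set.Ici (0:ℝ), G i j k x) := rfl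
  rw [hLHS, hswap1]
  -- pointwise bound on the sum, then integrate
  have hptwise : ∀ x : ℝ,
      ∑ i ∈ Finset.range n, ∑ j ∈ Finset.range n, ∑ k ∈ Finset.range n, G i j k x
      ≤ Set.indicator (Set.Icc 0 T) (fun _ => M) x := by
    intro x
    rw [hswap2 x]
    by_cases hx : x ≤ T
    · by_cases hx0 : 0 ≤ x
      · rw [Set.indicator_of_mem (Set.mem_Icc.mpr ⟨hx0, hx⟩)]
        have hle : (∫ z in Set.Ici (0:ℝ),
              ∑ i ∈ Finset.range n, ∑ j ∈ Finset.range n, ∑ k ∈ Finset.range n,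
                Fm lam mu T n i j k (x, z))
            ≤ ∫ z in Set.Ici (0:ℝ), K^3 * (lam * n * mu * Real.exp (-mu * z)) := by
          apply integral_mono_of_nonneg ?_ hgint ?_
          · apply ae_of_all
            intro z
            apply Finset.sum_nonneg fun i _ => Finset.sum_nonneg fun j _ =>
              Finset.sum_nonneg fun k _ => Fm_nonneg lam mu T hlam hmu n i j k _
          · apply ae_of_all
            intro z
            dsimp only
            rw [sum_Fm]
            apply mul_le_mul_of_nonneg_right _ (by positivity)
            have h1 := hsum (x, z)
            have h2 : (0:ℝ) ≤ ∑ i ∈ Finset.range n, |uSharp T mu n i (x, z)| :=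
              Finset.sum_nonneg fun i _ => abs_nonneg _
            gcongr
        have heqM : (∫ z in Set.Ici (0:ℝ), K^3 * (lam * n * mu * Real.exp (-mu * z))) = M := by
          rw [hMdef, hCzdef, hfuneq, integral_const_mul]
        exact hle.trans (le_of_eq heqM)
      · rw [Set.indicator_of_notMem (by simp [Set.mem_Icc]; intro h; exact absurd h hx0)]
        have hz : ∀ z : ℝ, ∑ i ∈ Finset.range n, ∑ j ∈ Finset.range n,
            ∑ k ∈ Finset.range n, Fm lam mu T n i j k (x, z) = 0 := by
          intro z
          rw [sum_Fm]
          have hind : ∀ t, indC t (x, z) = 0 := fun t =>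
            Set.indicator_of_notMem (fun hc => hx0 hc.1) _
          have : ∑ i ∈ Finset.range n, |uSharp T mu n i (x, z)| = 0 := by
            apply Finset.sum_eq_zero
            intro i _
            have hu0 : uSharp T mu n i (x, z) = 0 := by
              rw [uSharp, hind, hind]
              rw [intervalIntegral.integral_congr (g := fun _ => (0:ℝ))
                (fun u _ => hind u), intervalIntegral.integral_zero]
              ring
            rw [hu0, abs_zero]
          rw [this]
          ring
        simp only [hz]
        rw [integral_zero]
    · rw [Set.indicator_of_notMem (by simp [Set.mem_Icc]; intro _; linarith)]
      have hz : ∀ z : ℝ, ∑ i ∈ Finset.range n, ∑ j ∈ Finset.range n,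
          ∑ k ∈ Finset.range n, Fm lam mu T n i j k (x, z) = 0 := by
        intro z
        apply Finset.sum_eq_zero; intro i hi
        apply Finset.sum_eq_zero; intro j hj
        apply Finset.sum_eq_zero; intro k hk
        exact hFzero i hi j hj k hk x z (not_le.mp hx)
      simp only [hz]
      rw [integral_zero]
  calc ∫ x in Set.Ici (0:ℝ),
        ∑ i ∈ Finset.range n, ∑ j ∈ Finset.range n, ∑ k ∈ Finset.range n, G i j k x
      ≤ ∫ x in Set.Ici (0:ℝ), Set.indicator (Set.Icc 0 T) (fun _ => M) x := by
        apply integral_mono_of_nonneg ?_ hindint (ae_of_all _ hptwise)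
        apply ae_of_all
        intro x
        apply Finset.sum_nonneg fun i _ => Finset.sum_nonneg fun j _ =>
          Finset.sum_nonneg fun k _ => hGnonneg i j k x
    _ = M * T := by
        rw [setIntegral_indicator measurableSet_Icc]
        rw [Set.inter_eq_self_of_subset_right Set.Icc_subset_Ici_self]
        rw [setIntegral_const]
        rw [Real.volume_real_Icc_of_le hT.le, sub_zero, smul_eq_mul]
        ring
    _ = (K^3 * lam * mu * Cz * T) * n := by rw [hMdef]; ring
    _ ≤ (K^3 * lam * mu * Cz * T + 1) * n := by
        apply mul_le_mul_of_nonneg_right _ hnR.le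
        linarith
end

section
/- Let λ, μ > 0, T > 0, n a positive integer, and 0 ≤ i ≤ n-1. Then ∫∫ u_i(x,z)² dν_n(x,z) = (n/T) ( γ((i+1)T/n) - γ(iT/n) ), where γ(t) = 2λt - (λ/μ)(1 - e^{-μt}). -/
open MeasureTheory

lemma indC_eq (t x z : ℝ) (hx : 0 ≤ x) :
    indC t (x, z) = if x ≤ t ∧ t ≤ x + z then 1 else 0 := by
  unfold indC
  by_cases h : x ≤ t ∧ t ≤ x + z
  · rw [if_pos h, Set.indicator_of_mem]
    exact ⟨hx, h.1, by linarith [h.2]⟩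
  · rw [if_neg h, Set.indicator_of_notMem]
    intro hm
    exact h ⟨hm.2.1, by linarith [hm.2.2]⟩

lemma Lint (a b x z : ℝ) (hab : a ≤ b) (hx : 0 ≤ x) :
    (∫ u in a..b, indC u (x, z)) = max (min (x+z) b - max x a) 0 := by
  have hfun : ∀ u, indC u (x, z) = Set.indicator (Set.Icc x (x+z)) (fun _ => (1:ℝ)) u := by
    intro u
    rw [indC_eq u x z hx, Set.indicator_apply]
    simp [Set.mem_Icc]
  rw [intervalIntegral.integral_of_le hab]
  simp_rw [hfun]
  rw [MeasureTheory.integral_indicator measurableSet_Icc,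
    Measure.restrict_restrict measurableSet_Icc, MeasureTheory.setIntegral_const]
  have hvol : volume (Set.Icc x (x+z) ∩ Set.Ioc a b)
      = volume (Set.Ioc (max x a) (min (x+z) b)) := by
    apply le_antisymm
    · have hsub : Set.Icc x (x+z) ∩ Set.Ioc a b
          ⊆ insert x (Set.Ioc (max x a) (min (x+z) b)) := by
        rintro u ⟨⟨h1, h2⟩, h3, h4⟩
        rcases eq_or_lt_of_le h1 with h | h
        · exact h ▸ Set.mem_insert _ _
        · exact Set.mem_insert_of_mem _ ⟨max_lt h h3, le_min h2 h4⟩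
      refine (measure_mono hsub).trans ?_
      rw [Set.insert_eq]
      refine (measure_union_le _ _).trans ?_
      simp
    · apply measure_mono
      rintro u ⟨h1, h2⟩
      exact ⟨⟨(le_max_left x a).trans h1.le, h2.trans (min_le_left _ _)⟩,
        lt_of_le_of_lt (le_max_right x a) h1, h2.trans (min_le_right _ _)⟩
  rw [measureReal_def, hvol, Real.volume_Ioc, smul_eq_mul, mul_one]
  rcases le_total (min (x+z) b - max x a) 0 with h | h
  · rw [ENNReal.ofReal_eq_zero.2 (by linarith), max_eq_right h]
    simp
  · rw [ENNReal.toReal_ofReal (by linarith), max_eq_left h]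
noncomputable def coreF (mu a b x z : ℝ) : ℝ :=
  indC b (x, z) - indC a (x, z) + mu * ∫ u in a..b, indC u (x, z)

lemma core_case1 (mu a b x z : ℝ) (hab : a ≤ b) (hx : 0 ≤ x) (hbx : b < x) :
    coreF mu a b x z = 0 := by
  unfold coreF
  rw [indC_eq _ _ _ hx, indC_eq _ _ _ hx, Lint a b x z hab hx,
    if_neg (by push_neg; intro h; linarith), if_neg (by push_neg; intro h; linarith),
    max_eq_right (by
      have h1 : min (x+z) b ≤ b := min_le_right _ _
      have h2 : x ≤ max x a := le_max_left _ _
      linarith)]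
  ring

lemma core_case2_small (mu a b x z : ℝ) (ha : 0 ≤ a) (hax : a < x) (hxb : x ≤ b)
    (hz : 0 ≤ z) (hzc : z < b - x) :
    coreF mu a b x z = mu * z := by
  have hx : 0 ≤ x := ha.trans hax.le
  unfold coreF
  rw [indC_eq _ _ _ hx, indC_eq _ _ _ hx, Lint a b x z (hax.le.trans hxb) hx,
    if_neg (by push_neg; intro h; linarith), if_neg (by push_neg; intro h; linarith),
    max_eq_left hax.le, min_eq_left (by linarith), max_eq_left (by linarith)]
  ring

lemma core_case2_large (mu a b x z : ℝ) (ha : 0 ≤ a) (hax : a < x) (hxb : x ≤ b)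
    (hzc : b - x < z) :
    coreF mu a b x z = 1 + mu * (b - x) := by
  have hx : 0 ≤ x := ha.trans hax.le
  unfold coreF
  rw [indC_eq _ _ _ hx, indC_eq _ _ _ hx, Lint a b x z (hax.le.trans hxb) hx,
    if_pos ⟨hxb, by linarith⟩, if_neg (by push_neg; intro h; linarith),
    max_eq_left hax.le, min_eq_right (by linarith), max_eq_left (by linarith)]
  ring

lemma core_case3_1 (mu a b x z : ℝ) (hx : 0 ≤ x) (hxa : x ≤ a) (hab : a ≤ b)
    (hz2 : z < a - x) :
    coreF mu a b x z = 0 := by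
  unfold coreF
  rw [indC_eq _ _ _ hx, indC_eq _ _ _ hx, Lint a b x z hab hx,
    if_neg (by push_neg; intro h; linarith), if_neg (by push_neg; intro h; linarith),
    max_eq_right hxa, min_eq_left (by linarith), max_eq_right (by linarith)]
  ring

lemma core_case3_2 (mu a b x z : ℝ) (hx : 0 ≤ x) (hxa : x ≤ a) (hab : a ≤ b)
    (hz1 : a - x < z) (hz2 : z < b - x) :
    coreF mu a b x z = mu * (z - (a - x)) - 1 := by
  unfold coreF
  rw [indC_eq _ _ _ hx, indC_eq _ _ _ hx, Lint a b x z hab hx,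
    if_neg (by push_neg; intro h; linarith), if_pos ⟨hxa, by linarith⟩,
    max_eq_right hxa, min_eq_left (by linarith), max_eq_left (by linarith)]
  ring

lemma core_case3_3 (mu a b x z : ℝ) (hx : 0 ≤ x) (hxa : x ≤ a) (hab : a ≤ b)
    (hz : b - x < z) :
    coreF mu a b x z = mu * (b - a) := by
  unfold coreF
  rw [indC_eq _ _ _ hx, indC_eq _ _ _ hx, Lint a b x z hab hx,
    if_pos ⟨hxa.trans hab, by linarith⟩, if_pos ⟨hxa, by linarith⟩,
    max_eq_right hxa, min_eq_right (by linarith), max_eq_left (by linarith)]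
  ring

lemma exp_deriv_aux (mu z : ℝ) :
    HasDerivAt (fun z : ℝ => Real.exp (-mu * z)) (-mu * Real.exp (-mu * z)) z := by
  have h : HasDerivAt (fun z : ℝ => -mu * z) (-mu) z := by
    simpa using (hasDerivAt_id z).const_mul (-mu)
  simpa [mul_comm] using h.exp

lemma exp_poly_deriv (mu A B C z : ℝ) :
    HasDerivAt (fun z => -Real.exp (-mu * z) * (A * z ^ 2 + B * z + C))
      (Real.exp (-mu * z) * (mu * A * z ^ 2 + (mu * B - 2 * A) * z + (mu * C - B))) z := by
  have h1 := (exp_deriv_aux mu z).neg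
  have h2 : HasDerivAt (fun z : ℝ => A * z ^ 2 + B * z + C) (2 * A * z + B) z := by
    have := (((hasDerivAt_pow 2 z).const_mul A).add ((hasDerivAt_id z).const_mul B)).add_const C
    exact this.congr_deriv (by push_cast; ring)
  have := h1.mul h2
  exact this.congr_deriv (by simp only [Pi.neg_apply]; ring)

lemma integral_exp_poly (mu A B C s t : ℝ) :
    ∫ z in s..t, Real.exp (-mu * z) * (mu * A * z ^ 2 + (mu * B - 2 * A) * z + (mu * C - B))
      = -Real.exp (-mu * t) * (A * t ^ 2 + B * t + C)
        + Real.exp (-mu * s) * (A * s ^ 2 + B * s + C) := by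
  rw [intervalIntegral.integral_eq_sub_of_hasDerivAt
    (fun z _ => exp_poly_deriv mu A B C z)
    (Continuous.intervalIntegrable (by continuity) s t)]
  ring

lemma integral_tail (mu K c : ℝ) (hmu : 0 < mu) :
    ∫ z in Set.Ioi c, K * (mu * Real.exp (-mu * z)) = K * Real.exp (-mu * c) := by
  have hint : IntegrableOn (fun z => K * (mu * Real.exp (-mu * z))) (Set.Ioi c) := by
    have h := (exp_neg_integrableOn_Ioi c hmu).const_mul (K * mu)
    have heq : (fun z => K * (mu * Real.exp (-mu * z)))
        = fun x => K * mu * Real.exp (-mu * x) := by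
      funext z; ring
    rw [heq]; exact h
  have hderiv : ∀ x ∈ Set.Ici c, HasDerivAt (fun z => -K * Real.exp (-mu * z))
      (K * (mu * Real.exp (-mu * x))) x := by
    intro x _
    have := (exp_deriv_aux mu x).const_mul (-K)
    exact this.congr_deriv (by ring)
  have htend : Filter.Tendsto (fun z => -K * Real.exp (-mu * z)) Filter.atTop (nhds 0) := by
    have h1 : Filter.Tendsto (fun z : ℝ => -mu * z) Filter.atTop Filter.atBot :=
      Filter.tendsto_id.const_mul_atTop_of_neg (by linarith)
    have h2 := Real.tendsto_exp_atBot.comp h1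
    have := h2.const_mul (-K)
    simpa using this
  rw [integral_Ioi_of_hasDerivAt_of_tendsto' hderiv hint htend]
  ring

lemma helper1 {f g : ℝ → ℝ} {s t : ℝ} (hst : s ≤ t) (h : Set.EqOn f g (Set.Ioo s t)) :
    ∫ z in Set.Ioc s t, f z = ∫ z in s..t, g z := by
  rw [MeasureTheory.integral_Ioc_eq_integral_Ioo,
    setIntegral_congr_fun measurableSet_Ioo h,
    ← MeasureTheory.integral_Ioc_eq_integral_Ioo, ← intervalIntegral.integral_of_le hst]

lemma helper2 {f g : ℝ → ℝ} {s t : ℝ} (h : Set.EqOn f g (Set.Ioo s t))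
    (hg : Continuous g) : IntegrableOn f (Set.Ioc s t) := by
  have h1 : IntegrableOn f (Set.Ioo s t) :=
    (integrableOn_congr_fun h measurableSet_Ioo).2
      ((hg.integrableOn_Icc).mono_set Set.Ioo_subset_Icc_self)
  unfold IntegrableOn
  rwa [← Measure.restrict_congr_set MeasureTheory.Ioo_ae_eq_Ioc]

lemma tail_integrableOn (mu K c : ℝ) (hmu : 0 < mu) :
    IntegrableOn (fun z => K * (mu * Real.exp (-mu * z))) (Set.Ioi c) := by
  have h := (exp_neg_integrableOn_Ioi c hmu).const_mul (K * mu)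
  have heq : (fun z => K * (mu * Real.exp (-mu * z)))
      = fun x => K * mu * Real.exp (-mu * x) := by
    funext z; ring
  rw [heq]; exact h

lemma inner1 (mu a b x : ℝ) (hab : a ≤ b) (hx : 0 ≤ x) (hbx : b < x) :
    ∫ z in Set.Ici (0:ℝ), coreF mu a b x z ^ 2 * (mu * Real.exp (-mu * z)) = 0 := by
  rw [setIntegral_congr_fun (g := fun _ => (0:ℝ)) measurableSet_Ici
    (fun z _ => by rw [core_case1 mu a b x z hab hx hbx]; ring)]
  simp

lemma inner2 (mu a b x : ℝ) (hmu : 0 < mu) (ha : 0 ≤ a) (hax : a < x) (hxb : x ≤ b) :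
    ∫ z in Set.Ici (0:ℝ), coreF mu a b x z ^ 2 * (mu * Real.exp (-mu * z))
      = 2 - Real.exp (-mu * (b - x)) := by
  have hc : (0:ℝ) ≤ b - x := by linarith
  have hEq1 : Set.EqOn (fun z => coreF mu a b x z ^ 2 * (mu * Real.exp (-mu * z)))
      (fun z => Real.exp (-mu * z) *
        (mu * mu ^ 2 * z ^ 2 + (mu * (2 * mu) - 2 * mu ^ 2) * z + (mu * 2 - 2 * mu)))
      (Set.Ioo 0 (b - x)) := by
    intro z hz
    simp only []
    rw [core_case2_small mu a b x z ha hax hxb hz.1.le hz.2]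
    ring
  have hEq2 : Set.EqOn (fun z => coreF mu a b x z ^ 2 * (mu * Real.exp (-mu * z)))
      (fun z => (1 + mu * (b - x)) ^ 2 * (mu * Real.exp (-mu * z))) (Set.Ioi (b - x)) := by
    intro z hz
    simp only []
    rw [core_case2_large mu a b x z ha hax hxb hz]
  have hint1 : IntegrableOn (fun z => coreF mu a b x z ^ 2 * (mu * Real.exp (-mu * z)))
      (Set.Ioc 0 (b - x)) := helper2 hEq1 (by continuity)
  have hint2 : IntegrableOn (fun z => coreF mu a b x z ^ 2 * (mu * Real.exp (-mu * z)))
      (Set.Ioi (b - x)) := by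
    rw [integrableOn_congr_fun hEq2 measurableSet_Ioi]
    exact tail_integrableOn mu _ _ hmu
  rw [MeasureTheory.integral_Ici_eq_integral_Ioi, ← Set.Ioc_union_Ioi_eq_Ioi hc,
    setIntegral_union (Set.Ioc_disjoint_Ioi le_rfl) measurableSet_Ioi hint1 hint2,
    helper1 hc hEq1, integral_exp_poly,
    setIntegral_congr_fun measurableSet_Ioi hEq2, integral_tail mu _ _ hmu]
  simp only [mul_zero, neg_zero, Real.exp_zero]
  ring

lemma inner3 (mu a b x : ℝ) (hmu : 0 < mu) (hx : 0 ≤ x) (hxa : x ≤ a) (hab : a ≤ b) :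
    ∫ z in Set.Ici (0:ℝ), coreF mu a b x z ^ 2 * (mu * Real.exp (-mu * z))
      = Real.exp (-mu * (a - x)) - Real.exp (-mu * (b - x)) := by
  have hp : (0:ℝ) ≤ a - x := by linarith
  have hpq : a - x ≤ b - x := by linarith
  have hEq1 : Set.EqOn (fun z => coreF mu a b x z ^ 2 * (mu * Real.exp (-mu * z)))
      (fun _ => (0:ℝ)) (Set.Ioo 0 (a - x)) := by
    intro z hz
    simp only []
    rw [core_case3_1 mu a b x z hx hxa hab hz.2]
    ring
  have hEq2 : Set.EqOn (fun z => coreF mu a b x z ^ 2 * (mu * Real.exp (-mu * z)))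
      (fun z => Real.exp (-mu * z) *
        (mu * mu ^ 2 * z ^ 2 + (mu * (-2 * mu ^ 2 * (a - x)) - 2 * mu ^ 2) * z +
          (mu * (mu ^ 2 * (a - x) ^ 2 + 1) - -2 * mu ^ 2 * (a - x))))
      (Set.Ioo (a - x) (b - x)) := by
    intro z hz
    simp only []
    rw [core_case3_2 mu a b x z hx hxa hab hz.1 hz.2]
    ring
  have hEq3 : Set.EqOn (fun z => coreF mu a b x z ^ 2 * (mu * Real.exp (-mu * z)))
      (fun z => (mu * (b - a)) ^ 2 * (mu * Real.exp (-mu * z))) (Set.Ioi (b - x)) := by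
    intro z hz
    simp only []
    rw [core_case3_3 mu a b x z hx hxa hab hz]
  have hint1 : IntegrableOn (fun z => coreF mu a b x z ^ 2 * (mu * Real.exp (-mu * z)))
      (Set.Ioc 0 (a - x)) := helper2 hEq1 continuous_const
  have hint2 : IntegrableOn (fun z => coreF mu a b x z ^ 2 * (mu * Real.exp (-mu * z)))
      (Set.Ioc (a - x) (b - x)) := helper2 hEq2 (by continuity)
  have hint3 : IntegrableOn (fun z => coreF mu a b x z ^ 2 * (mu * Real.exp (-mu * z)))
      (Set.Ioi (b - x)) := by
    rw [integrableOn_congr_fun hEq3 measurableSet_Ioi]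
    exact tail_integrableOn mu _ _ hmu
  have hint23 : IntegrableOn (fun z => coreF mu a b x z ^ 2 * (mu * Real.exp (-mu * z)))
      (Set.Ioi (a - x)) := by
    rw [← Set.Ioc_union_Ioi_eq_Ioi hpq]
    exact hint2.union hint3
  rw [MeasureTheory.integral_Ici_eq_integral_Ioi, ← Set.Ioc_union_Ioi_eq_Ioi hp,
    setIntegral_union (Set.Ioc_disjoint_Ioi le_rfl) measurableSet_Ioi hint1 hint23,
    ← Set.Ioc_union_Ioi_eq_Ioi hpq,
    setIntegral_union (Set.Ioc_disjoint_Ioi le_rfl) measurableSet_Ioi hint2 hint3,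
    helper1 hp hEq1, helper1 hpq hEq2, integral_exp_poly,
    setIntegral_congr_fun measurableSet_Ioi hEq3, integral_tail mu _ _ hmu]
  simp only [intervalIntegral.integral_const, smul_eq_mul, mul_zero]
  ring

lemma exp_shift_deriv (mu t x : ℝ) (hmu : mu ≠ 0) :
    HasDerivAt (fun x => Real.exp (-mu * (t - x)) / mu) (Real.exp (-mu * (t - x))) x := by
  have h1 : HasDerivAt (fun x : ℝ => -mu * (t - x)) mu x := by
    have := ((hasDerivAt_id x).const_sub t).const_mul (-mu)
    exact this.congr_deriv (by ring)
  have h2 := h1.exp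
  have h3 := h2.div_const mu
  exact h3.congr_deriv (by field_simp)

lemma int_outer1 (mu a b : ℝ) (hmu : 0 < mu) :
    ∫ x in (0:ℝ)..a, (Real.exp (-mu * (a - x)) - Real.exp (-mu * (b - x)))
      = ((1 - Real.exp (-mu * (b - a))) - (Real.exp (-mu * a) - Real.exp (-mu * b))) / mu := by
  rw [intervalIntegral.integral_eq_sub_of_hasDerivAt
    (f := fun x => Real.exp (-mu * (a - x)) / mu - Real.exp (-mu * (b - x)) / mu)
    (fun x _ => (exp_shift_deriv mu a x hmu.ne').sub (exp_shift_deriv mu b x hmu.ne'))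
    (Continuous.intervalIntegrable (by continuity) 0 a)]
  simp only [sub_self, mul_zero, neg_zero, Real.exp_zero, sub_zero]
  ring

lemma int_outer2 (mu a b : ℝ) (hmu : 0 < mu) :
    ∫ x in a..b, (2 - Real.exp (-mu * (b - x)))
      = 2 * (b - a) - (1 - Real.exp (-mu * (b - a))) / mu := by
  rw [intervalIntegral.integral_eq_sub_of_hasDerivAt
    (f := fun x => 2 * x - Real.exp (-mu * (b - x)) / mu)
    (fun x _ => (((hasDerivAt_id x).const_mul 2).sub (exp_shift_deriv mu b x hmu.ne')).congr_deriv
      (by ring))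
    (Continuous.intervalIntegrable (by continuity) a b)]
  simp only [sub_self, mul_zero, neg_zero, Real.exp_zero]
  ring

lemma outer_main (mu a b : ℝ) (hmu : 0 < mu) (ha : 0 ≤ a) (hab : a ≤ b) :
    ∫ x in Set.Ici (0:ℝ),
        (∫ z in Set.Ici (0:ℝ), coreF mu a b x z ^ 2 * (mu * Real.exp (-mu * z)))
      = 2 * (b - a) - (Real.exp (-mu * a) - Real.exp (-mu * b)) / mu := by
  have hb : (0:ℝ) ≤ b := ha.trans hab
  set F := fun x => ∫ z in Set.Ici (0:ℝ), coreF mu a b x z ^ 2 * (mu * Real.exp (-mu * z))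
    with hF
  have hEq1 : Set.EqOn F
      (fun x => Real.exp (-mu * (a - x)) - Real.exp (-mu * (b - x))) (Set.Ioo 0 a) :=
    fun x hx => inner3 mu a b x hmu hx.1.le hx.2.le hab
  have hEq2 : Set.EqOn F (fun x => 2 - Real.exp (-mu * (b - x))) (Set.Ioo a b) :=
    fun x hx => inner2 mu a b x hmu ha hx.1 hx.2.le
  have hEq3 : Set.EqOn F (fun _ => (0:ℝ)) (Set.Ioi b) :=
    fun x hx => inner1 mu a b x hab (hb.trans (Set.mem_Ioi.1 hx).le) hx
  have hint1 : IntegrableOn F (Set.Ioc 0 a) := helper2 hEq1 (by continuity)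
  have hint2 : IntegrableOn F (Set.Ioc a b) := helper2 hEq2 (by continuity)
  have hint3 : IntegrableOn F (Set.Ioi b) := by
    rw [integrableOn_congr_fun hEq3 measurableSet_Ioi]
    exact integrableOn_zero
  have hint23 : IntegrableOn F (Set.Ioi a) := by
    rw [← Set.Ioc_union_Ioi_eq_Ioi hab]
    exact hint2.union hint3
  rw [MeasureTheory.integral_Ici_eq_integral_Ioi, ← Set.Ioc_union_Ioi_eq_Ioi ha,
    setIntegral_union (Set.Ioc_disjoint_Ioi le_rfl) measurableSet_Ioi hint1 hint23,
    ← Set.Ioc_union_Ioi_eq_Ioi hab,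
    setIntegral_union (Set.Ioc_disjoint_Ioi le_rfl) measurableSet_Ioi hint2 hint3,
    helper1 ha hEq1, helper1 hab hEq2,
    setIntegral_congr_fun measurableSet_Ioi hEq3,
    int_outer1 mu a b hmu, int_outer2 mu a b hmu]
  simp only [integral_zero]
  ring

/-- `γ(t) = 2λt - (λ/μ)(1 - e^{-μt})`. -/
noncomputable def gammaFun (lam mu t : ℝ) : ℝ :=
  2 * lam * t - (lam / mu) * (1 - Real.exp (-mu * t))

/-- `∫∫ u_i² dν_n = (n/T)(γ((i+1)T/n) - γ(iT/n))`, where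
`dν_n(x,z) = λn dx ⊗ μ e^{-μz} dz` on `[0,∞)²`. -/
theorem stmt12 (lam mu T : ℝ) (hlam : 0 < lam) (hmu : 0 < mu) (hT : 0 < T)
    (n : ℕ) (hn : 0 < n) (i : ℕ) (hi : i ≤ n - 1) :
    ∫ x in Set.Ici (0:ℝ), ∫ z in Set.Ici (0:ℝ),
      (uSharp T mu n i (x, z)) ^ 2 * (lam * n * mu * Real.exp (-mu * z))
      = ((n : ℝ) / T) *
          (gammaFun lam mu (((i : ℝ) + 1) * T / n) - gammaFun lam mu ((i : ℝ) * T / n)) := by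
  have hn' : (0:ℝ) < n := by exact_mod_cast hn
  have hA : (0:ℝ) ≤ (i : ℝ) * T / n := by positivity
  have hAB : (i : ℝ) * T / n ≤ ((i : ℝ) + 1) * T / n := by
    gcongr
    nlinarith [hT.le]
  have hpt : ∀ x z : ℝ, uSharp T mu n i (x, z) ^ 2 * (lam * n * mu * Real.exp (-mu * z))
      = (lam * n / T) *
        (coreF mu ((i : ℝ) * T / n) (((i : ℝ) + 1) * T / n) x z ^ 2
          * (mu * Real.exp (-mu * z))) := by
    intro x z
    show ((1 / Real.sqrt T) * coreF mu ((i : ℝ) * T / n) (((i : ℝ) + 1) * T / n) x z) ^ 2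
        * (lam * n * mu * Real.exp (-mu * z)) = _
    rw [mul_pow, div_pow, one_pow, Real.sq_sqrt hT.le]
    ring
  simp_rw [hpt, MeasureTheory.integral_const_mul]
  rw [outer_main mu ((i : ℝ) * T / n) (((i : ℝ) + 1) * T / n) hmu hA hAB]
  unfold gammaFun
  field_simp
  ring
end

section
/- Let λ, μ > 0 and u, v, w ≥ 0. Then ∫∫_{[0,∞)²} 1_{C_u}(x,z) 1_{C_v}(x,z) 1_{C_w}(x,z) λ μ e^{-μ z} dx dz = (λ/μ)( e^{-μ(M - m)} - e^{-μ M} ), where M = max(u,v,w) and m = min(u,v,w). -/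
open MeasureTheory

lemma indC_eq_s13 (t : ℝ) (p : ℝ × ℝ) :
    indC t p = if 0 ≤ p.1 ∧ p.1 ≤ t ∧ t - p.1 ≤ p.2 then 1 else 0 := by
  simp [indC, Set.indicator_apply, Ctrap, Set.mem_setOf_eq]

lemma expInt (mu a : ℝ) (hmu : 0 < mu) :
    ∫ z in Set.Ioi a, mu * Real.exp (-mu * z) = Real.exp (-mu * a) := by
  have hderiv : ∀ x ∈ Set.Ici a,
      HasDerivAt (fun z => -Real.exp (-mu * z)) (mu * Real.exp (-mu * x)) x := by
    intro x _
    have h := ((hasDerivAt_id x).const_mul (-mu)).exp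
    have h2 : HasDerivAt (fun z => -Real.exp (-mu * z)) (-(Real.exp (-mu * x) * (-mu * 1))) x := h.neg
    convert h2 using 1
    simp [id]
    ring
  have hint : IntegrableOn (fun z => mu * Real.exp (-mu * z)) (Set.Ioi a) := by
    have : IntegrableOn (fun z => Real.exp (-mu * z)) (Set.Ioi a) := by
      simpa [neg_mul, mul_comm] using exp_neg_integrableOn_Ioi a hmu
    exact this.const_mul mu
  have htend : Filter.Tendsto (fun z => -Real.exp (-mu * z)) Filter.atTop (nhds 0) := by
    rw [← neg_zero]
    apply Filter.Tendsto.neg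
    have h1 : Filter.Tendsto (fun z : ℝ => mu * z) Filter.atTop Filter.atTop :=
      Filter.Tendsto.const_mul_atTop hmu Filter.tendsto_id
    exact (Real.tendsto_exp_neg_atTop_nhds_zero.comp h1).congr
      (fun z => by simp [Function.comp, neg_mul])
  have := integral_Ioi_of_hasDerivAt_of_tendsto' hderiv hint htend
  simpa using this

/-- `∫∫ 1_{C_u}1_{C_v}1_{C_w} λμ e^{-μz} dx dz = (λ/μ)(e^{-μ(M-m)} - e^{-μM})`
with `M = max(u,v,w)`, `m = min(u,v,w)`. -/
theorem stmt13 (lam mu : ℝ) (hlam : 0 < lam) (hmu : 0 < mu)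
    (u v w : ℝ) (hu : 0 ≤ u) (hv : 0 ≤ v) (hw : 0 ≤ w) :
    ∫ x in Set.Ici (0:ℝ), ∫ z in Set.Ici (0:ℝ),
      indC u (x, z) * indC v (x, z) * indC w (x, z) * (lam * mu * Real.exp (-mu * z))
      = (lam / mu) *
          (Real.exp (-mu * (max u (max v w) - min u (min v w)))
            - Real.exp (-mu * max u (max v w))) := by
  set M := max u (max v w) with hM
  set m := min u (min v w) with hm
  have hmM : m ≤ M := le_trans (min_le_left _ _) (le_max_left _ _)
  have hm0 : 0 ≤ m := le_min hu (le_min hv hw)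
  -- inner integral
  have inner : ∀ x ∈ Set.Ici (0:ℝ),
      (∫ z in Set.Ici (0:ℝ),
        indC u (x, z) * indC v (x, z) * indC w (x, z) * (lam * mu * Real.exp (-mu * z)))
      = Set.indicator (Set.Icc 0 m) (fun x => lam * Real.exp (-mu * (M - x))) x := by
    intro x hx
    simp only [Set.mem_Ici] at hx
    by_cases hxm : x ≤ m
    · have hxu : x ≤ u := hxm.trans (min_le_left _ _)
      have hxv : x ≤ v := hxm.trans (le_trans (min_le_right _ _) (min_le_left _ _))
      have hxw : x ≤ w := hxm.trans (le_trans (min_le_right _ _) (min_le_right _ _))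
      have hMx : 0 ≤ M - x := by
        have : x ≤ M := hxm.trans hmM
        linarith
      have hfun : (fun z => indC u (x, z) * indC v (x, z) * indC w (x, z) *
          (lam * mu * Real.exp (-mu * z)))
          = Set.indicator (Set.Ici (M - x)) (fun z => lam * (mu * Real.exp (-mu * z))) := by
        funext z
        rw [indC_eq_s13, indC_eq_s13, indC_eq_s13, Set.indicator_apply]
        simp only [Set.mem_Ici]
        by_cases hz : M - x ≤ z
        · have h1 : u - x ≤ z := by
            have : u ≤ M := le_max_left _ _; linarith
          have h2 : v - x ≤ z := by
            have : v ≤ M := le_trans (le_max_left _ _) (le_max_right _ _); linarith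
          have h3 : w - x ≤ z := by
            have : w ≤ M := le_trans (le_max_right _ _) (le_max_right _ _); linarith
          simp only [hx, hxu, hxv, hxw, h1, h2, h3, and_self, if_true, hz]
          ring
        · have : ¬ (u - x ≤ z) ∨ ¬ (v - x ≤ z) ∨ ¬ (w - x ≤ z) := by
            by_contra hc
            push_neg at hc
            have hMle : M - x ≤ z := by
              rcases max_cases u (max v w) with ⟨h, _⟩ | ⟨h, _⟩
              · rw [hM]; linarith [hc.1]
              · rcases max_cases v w with ⟨h2, _⟩ | ⟨h2, _⟩
                · rw [hM, h, h2]; linarith [hc.2.1]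
                · rw [hM, h, h2]; linarith [hc.2.2]
            exact hz hMle
          rcases this with h | h | h <;> simp [h, hz]
      rw [hfun, MeasureTheory.integral_indicator measurableSet_Ici,
        Measure.restrict_restrict measurableSet_Ici]
      have hset : Set.Ici (M - x) ∩ Set.Ici (0:ℝ) = Set.Ici (M - x) := by
        rw [Set.Ici_inter_Ici, max_eq_left hMx]
      rw [hset, Set.indicator_of_mem (Set.mem_Icc.2 ⟨hx, hxm⟩)]
      rw [MeasureTheory.integral_Ici_eq_integral_Ioi, MeasureTheory.integral_const_mul,
        expInt mu (M - x) hmu]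
    · -- x > m : some indicator vanishes
      have : ∀ z : ℝ, indC u (x, z) * indC v (x, z) * indC w (x, z) *
          (lam * mu * Real.exp (-mu * z)) = 0 := by
        intro z
        push_neg at hxm
        have : ¬ (x ≤ u) ∨ ¬ (x ≤ v) ∨ ¬ (x ≤ w) := by
          by_contra hc
          push_neg at hc
          exact absurd (le_min hc.1 (le_min hc.2.1 hc.2.2)) (not_le.2 hxm)
        rw [indC_eq_s13, indC_eq_s13, indC_eq_s13]
        rcases this with h | h | h <;> simp [h]
      simp only [this, integral_zero,
        Set.indicator_of_notMem (fun hc => hxm (Set.mem_Icc.1 hc).2)]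
  rw [MeasureTheory.setIntegral_congr_fun measurableSet_Ici inner,
    MeasureTheory.integral_indicator measurableSet_Icc,
    Measure.restrict_restrict measurableSet_Icc]
  have hset : Set.Icc (0:ℝ) m ∩ Set.Ici 0 = Set.Icc 0 m :=
    Set.inter_eq_left.2 (fun x hx => (Set.mem_Icc.1 hx).1)
  rw [hset, MeasureTheory.integral_Icc_eq_integral_Ioc, ← intervalIntegral.integral_of_le hm0]
  have hF : ∀ x ∈ Set.uIcc (0:ℝ) m,
      HasDerivAt (fun x => lam / mu * Real.exp (-mu * (M - x)))
        (lam * Real.exp (-mu * (M - x))) x := by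
    intro x _
    have hg : HasDerivAt (fun x : ℝ => -mu * (M - x)) mu x := by
      have := ((hasDerivAt_id x).const_sub M).const_mul (-mu)
      simpa using this
    have : HasDerivAt (fun x => lam / mu * Real.exp (-mu * (M - x))) (lam / mu * (Real.exp (-mu * (M - x)) * mu)) x := (hg.exp).const_mul (lam / mu)
    convert this using 1
    field_simp
  have hc : Continuous fun x : ℝ => lam * Real.exp (-mu * (M - x)) :=
    continuous_const.mul (Real.continuous_exp.comp
      (continuous_const.mul (continuous_const.sub continuous_id)))
  rw [intervalIntegral.integral_eq_sub_of_hasDerivAt hF (hc.intervalIntegrable 0 m)]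
  ring
end
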